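/- Existence of solutions of the learning problem (Theorem 4.1): Assume hypotheses (H1)–(H6) and let u† ∈ Ũ. Then the learning problem (LP) has a solution: there exist α* ∈ [α̲,ᾱ] and (y*,u*) ∈ F_ad solving (P_{α*,y_δ}) such that ‖u* − u†‖²_Ũ ≤ ‖u_α − u†‖²_Ũ for every α ∈ [α̲,ᾱ] and every (y_α,u_α) ∈ F_ad solving (P_{α,y_δ}). -/

import Mathlib

open Filter Topology ENNReal
open scoped RealInnerProductSpace

/-- Weak convergence of a sequence in a real normed space: convergence tested against
all continuous linear functionals. -/
def WeakConv {X : Type*} [NormedAddCommGroup X] [NormedSpace ℝ X]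
    (x : ℕ → X) (x₀ : X) : Prop :=
  ∀ f : X →L[ℝ] ℝ, Tendsto (fun n => f (x n)) atTop (𝓝 (f x₀))

/-- The feasible set `F_ad` of the lower level problem. -/
def Fad {Y U Z : Type*} [Zero Z] (Uad : Set U) (e : Y → U → Z) : Set (Y × U) :=
  {p | p.2 ∈ Uad ∧ e p.1 p.2 = 0}

/-- The Tikhonov functional `J_{α,yδ}` of the lower level problem, with values in `[0,∞]`. -/
noncomputable def Jfun {Y U Ytil : Type*} [NormedAddCommGroup Y] [NormedSpace ℝ Y]
    [NormedAddCommGroup U] [NormedSpace ℝ U]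
    [NormedAddCommGroup Ytil] [InnerProductSpace ℝ Ytil]
    {m r : ℕ} (ιY : Y →L[ℝ] Ytil) (Ψ : Fin r → U → ℝ≥0∞)
    (α : Fin r → ℝ) (yδ : Fin m → Ytil) (p : Y × U) : ℝ≥0∞ :=
  ENNReal.ofReal ((1 / (2 * (m : ℝ))) * ∑ j, ‖ιY p.1 - yδ j‖ ^ 2)
    + ∑ i, ENNReal.ofReal (α i) * Ψ i p.2

/-- `p = (y,u)` solves the lower level problem `(P_{α,yδ})`. -/
def Solves {Y U Z Ytil : Type*} [NormedAddCommGroup Y] [NormedSpace ℝ Y]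
    [NormedAddCommGroup U] [NormedSpace ℝ U]
    [NormedAddCommGroup Ytil] [InnerProductSpace ℝ Ytil] [Zero Z]
    {m r : ℕ} (Uad : Set U) (e : Y → U → Z) (ιY : Y →L[ℝ] Ytil)
    (Ψ : Fin r → U → ℝ≥0∞) (α : Fin r → ℝ) (yδ : Fin m → Ytil)
    (p : Y × U) : Prop :=
  p ∈ Fad Uad e ∧ ∀ q ∈ Fad Uad e, Jfun ιY Ψ α yδ p ≤ Jfun ιY Ψ α yδ q

section AuxWSC
open NormedSpace


-- functional vanishing on a closed submodule, positive at an outside point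
lemma exists_vanishing_functional {X : Type*} [NormedAddCommGroup X] [NormedSpace ℝ X]
    (M : Submodule ℝ X) (hM : IsClosed (M : Set X)) (x : X) (hx : x ∉ M) :
    ∃ f : X →L[ℝ] ℝ, (∀ z ∈ M, f z = 0) ∧ 0 < f x := by
  obtain ⟨f, u, hfM, hux⟩ := geometric_hahn_banach_closed_point M.convex hM hx
  have hzero : ∀ z ∈ M, f z = 0 := by
    intro z hz
    by_contra h0
    have : f (((u + 1) / f z) • z) < u := hfM _ (M.smul_mem _ hz)
    rw [map_smul] at this
    simp only [smul_eq_mul] at this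
    rw [div_mul_cancel₀ _ h0] at this
    linarith
  have h0 : (0:ℝ) < u := by
    have := hfM 0 M.zero_mem
    simpa using this
  exact ⟨f, hzero, h0.trans hux⟩

-- countable separating family on a separable closed submodule
lemma exists_separating_family {X : Type*} [NormedAddCommGroup X] [NormedSpace ℝ X]
    (M : Submodule ℝ X) (hsep : TopologicalSpace.IsSeparable (M : Set X)) :
    ∃ g : ℕ → (X →L[ℝ] ℝ), ∀ z ∈ M, (∀ j, g j z = 0) → z = 0 := by
  obtain ⟨t, htc, htd⟩ := hsep
  have hne : (insert (0:X) t).Nonempty := ⟨0, Set.mem_insert _ _⟩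
  obtain ⟨mseq, hmseq⟩ := (htc.insert 0).exists_eq_range hne
  choose g hg1 hg2 using fun j => exists_dual_vector'' ℝ (mseq j)
  refine ⟨g, fun z hz h0 => ?_⟩
  by_contra hz0
  have hzpos : 0 < ‖z‖ := norm_pos_iff.2 hz0
  have hzc : z ∈ closure t := htd hz
  obtain ⟨y, hyt, hyz⟩ := Metric.mem_closure_iff.1 hzc (‖z‖/3) (by linarith)
  have hyr : y ∈ Set.range mseq := by rw [← hmseq]; exact Set.mem_insert_of_mem _ hyt
  obtain ⟨j, rfl⟩ := hyr
  have h2 : g j (mseq j) = g j (mseq j - z) := by rw [map_sub, h0 j, sub_zero]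
  have h3 : g j (mseq j - z) ≤ ‖mseq j - z‖ := by
    calc g j (mseq j - z) ≤ ‖g j (mseq j - z)‖ := le_abs_self _
    _ ≤ ‖g j‖ * ‖mseq j - z‖ := (g j).le_opNorm _
    _ ≤ 1 * ‖mseq j - z‖ := mul_le_mul_of_nonneg_right (hg1 j) (norm_nonneg _)
    _ = ‖mseq j - z‖ := one_mul _
  have h4 : ‖mseq j - z‖ < ‖z‖/3 := by
    rw [← dist_eq_norm]; rw [dist_comm]; exact hyz
  have h5 : ‖z‖ - ‖mseq j‖ ≤ ‖mseq j - z‖ := by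
    have := norm_sub_norm_le z (mseq j)
    rw [norm_sub_rev (mseq j) z]
    linarith
  have h6 : ‖mseq j‖ = g j (mseq j) := (hg2 j).symm
  linarith

open TopologicalSpace in
lemma weak_seq_compact {X : Type*} [NormedAddCommGroup X] [NormedSpace ℝ X]
    (hrefl : Function.Surjective (inclusionInDoubleDual ℝ X))
    (x : ℕ → X) (C : ℝ) (hb : ∀ n, ‖x n‖ ≤ C) :
    ∃ (x₀ : X) (φ : ℕ → ℕ), StrictMono φ ∧ WeakConv (x ∘ φ) x₀ := by
  classical
  set J : X →L[ℝ] StrongDual ℝ (StrongDual ℝ X) := inclusionInDoubleDual ℝ X with hJ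
  set M : Submodule ℝ X := (Submodule.span ℝ (Set.range x)).topologicalClosure with hM
  have hMc : IsClosed (M : Set X) := Submodule.isClosed_topologicalClosure _
  have hMsep : IsSeparable (M : Set X) := by
    rw [hM, Submodule.topologicalClosure_coe]
    exact ((Set.countable_range x).isSeparable.span).closure
  have hxM : ∀ n, x n ∈ M :=
    fun n => Submodule.le_topologicalClosure _ (Submodule.subset_span (Set.mem_range_self n))
  obtain ⟨g, hgsep⟩ := exists_separating_family M hMsep
  -- the sequence in the weak-star dual of the dual
  set w : ℕ → WeakDual ℝ (StrongDual ℝ X) := fun n => StrongDual.toWeakDual (J (x n)) with hw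
  set K : Set (WeakDual ℝ (StrongDual ℝ X)) := closure (Set.range w) with hK
  -- K is compact
  have hKball : K ⊆ WeakDual.toStrongDual ⁻¹' Metric.closedBall 0 C := by
    apply closure_minimal _ (WeakDual.isClosed_closedBall 0 C)
    rintro _ ⟨n, rfl⟩
    simp only [Set.mem_preimage, Metric.mem_closedBall, dist_zero_right]
    exact le_trans (NormedSpace.double_dual_bound ℝ X (x n)) (hb n)
  have hKcomp : IsCompact K :=
    (WeakDual.isCompact_closedBall (𝕜 := ℝ) (E := StrongDual ℝ X) 0 C).of_isClosed_subset isClosed_closure hKball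
  -- K is contained in the image of M
  have hKM : K ⊆ {ψ | ∃ z ∈ M, StrongDual.toWeakDual (J z) = ψ} := by
    apply closure_minimal
    · rintro _ ⟨n, rfl⟩; exact ⟨x n, hxM n, rfl⟩
    · rw [← isOpen_compl_iff, isOpen_iff_mem_nhds]
      intro ψ hψ
      obtain ⟨x', hx'⟩ := hrefl (WeakDual.toStrongDual ψ)
      have hx'M : x' ∉ M := by
        intro h; exact hψ ⟨x', h, by rw [hx']; rfl⟩
      obtain ⟨f, hf0, hfx⟩ := exists_vanishing_functional M hMc x' hx'M
      have hopen : IsOpen {φ : WeakDual ℝ (StrongDual ℝ X) | (0:ℝ) < φ f} :=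
        isOpen_Ioi.preimage (WeakDual.eval_continuous f)
      have hmem : ψ ∈ {φ : WeakDual ℝ (StrongDual ℝ X) | (0:ℝ) < φ f} := by
        have h1 : (J x') f = ψ f := DFunLike.congr_fun hx' f
        have h2 : (J x') f = f x' := rfl
        simp only [Set.mem_setOf_eq, ← h1, h2]
        exact hfx
      refine Filter.mem_of_superset (hopen.mem_nhds hmem) ?_
      rintro φ hφ ⟨z, hzM, rfl⟩
      have : f z = 0 := hf0 z hzM
      simp only [Set.mem_setOf_eq] at hφ
      have hφf : StrongDual.toWeakDual (J z) f = f z := rfl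
      rw [hφf, this] at hφ
      exact lt_irrefl _ hφ
  -- the map into a metrizable space
  haveI : CompactSpace K := isCompact_iff_compactSpace.1 hKcomp
  let Φ : K → (ℕ → ℝ) := fun ψ j => (ψ : WeakDual ℝ (StrongDual ℝ X)) (g j)
  have hΦc : Continuous Φ :=
    continuous_pi fun j => (WeakDual.eval_continuous (g j)).comp continuous_subtype_val
  have hΦi : Function.Injective Φ := by
    rintro ⟨ψ₁, h1⟩ ⟨ψ₂, h2⟩ h
    obtain ⟨z₁, hz₁, rfl⟩ := hKM h1
    obtain ⟨z₂, hz₂, rfl⟩ := hKM h2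
    have hj : ∀ j, g j z₁ = g j z₂ := fun j => congrFun h j
    have hz : z₁ - z₂ = 0 := by
      refine hgsep _ (M.sub_mem hz₁ hz₂) (fun j => ?_)
      rw [map_sub, hj j, sub_self]
    have : z₁ = z₂ := sub_eq_zero.1 hz
    subst this
    rfl
  haveI : TopologicalSpace.MetrizableSpace K :=
    (hΦc.isClosedEmbedding hΦi).toIsEmbedding.metrizableSpace
  obtain ⟨ψbar, φ, hφ, hconv⟩ := SeqCompactSpace.tendsto_subseq
    (fun n => (⟨w n, subset_closure (Set.mem_range_self n)⟩ : K))
  obtain ⟨x₀, _, hx₀⟩ := hKM ψbar.2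
  refine ⟨x₀, φ, hφ, fun f => ?_⟩
  have hc : Tendsto (fun n => ((((fun n => (⟨w n, subset_closure (Set.mem_range_self n)⟩ : K)) ∘ φ) n : K) : WeakDual ℝ (StrongDual ℝ X)) f) atTop (𝓝 ((ψbar : WeakDual ℝ (StrongDual ℝ X)) f)) :=
    ((WeakDual.eval_continuous f).comp continuous_subtype_val).continuousAt.tendsto.comp hconv
  have heq : ∀ n, ((((fun n => (⟨w n, subset_closure (Set.mem_range_self n)⟩ : K)) ∘ φ) n : K) : WeakDual ℝ (StrongDual ℝ X)) f = f (x (φ n)) := fun n => rfl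
  have heq2 : (ψbar : WeakDual ℝ (StrongDual ℝ X)) f = f x₀ := by rw [← hx₀]; rfl
  simp only [heq, heq2] at hc
  exact hc

end AuxWSC

section AuxLemmas
open NormedSpace


variable {X X' : Type*} [NormedAddCommGroup X] [NormedSpace ℝ X]
  [NormedAddCommGroup X'] [NormedSpace ℝ X']

lemma WeakConv.comp_clm {x : ℕ → X} {x₀ : X} (h : WeakConv x x₀) (T : X →L[ℝ] X') :
    WeakConv (fun n => T (x n)) (T x₀) := fun f => h (f.comp T)

lemma WeakConv.sub_const {x : ℕ → X} {x₀ : X} (h : WeakConv x x₀) (c : X) :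
    WeakConv (fun n => x n - c) (x₀ - c) := by
  intro f
  simp only [map_sub]
  exact (h f).sub tendsto_const_nhds

lemma WeakConv.subseq {x : ℕ → X} {x₀ : X} (h : WeakConv x x₀) {φ : ℕ → ℕ}
    (hφ : StrictMono φ) : WeakConv (fun n => x (φ n)) x₀ :=
  fun f => (h f).comp hφ.tendsto_atTop

lemma WeakConv.prod {x : ℕ → X} {x₀ : X} {y : ℕ → X'} {y₀ : X'}
    (hx : WeakConv x x₀) (hy : WeakConv y y₀) :
    WeakConv (fun n => (x n, y n)) (x₀, y₀) := by
  intro f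
  have hdec : ∀ (p : X × X'), f p = f.comp (ContinuousLinearMap.inl ℝ X X') p.1
      + f.comp (ContinuousLinearMap.inr ℝ X X') p.2 := by
    intro p
    simp only [ContinuousLinearMap.comp_apply, ContinuousLinearMap.inl_apply,
      ContinuousLinearMap.inr_apply]
    rw [← map_add]
    simp
  simp only [hdec]
  exact (hx _).add (hy _)

/-- Mazur: convex closed sets are weakly sequentially closed. -/
lemma mem_of_weakConv {s : Set X} (hconv : Convex ℝ s) (hcl : IsClosed s)
    {x : ℕ → X} {x₀ : X} (hmem : ∀ n, x n ∈ s) (h : WeakConv x x₀) : x₀ ∈ s := by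
  by_contra hx0
  obtain ⟨f, u, hfs, hfx⟩ := geometric_hahn_banach_closed_point hconv hcl hx0
  have h1 : ∀ n, f (x n) < u := fun n => hfs _ (hmem n)
  have h2 : Tendsto (fun n => f (x n)) atTop (𝓝 (f x₀)) := h f
  have : f x₀ ≤ u := le_of_tendsto' h2 (fun n => (h1 n).le)
  linarith

/-- Weak lower semicontinuity of the norm, in `ℝ≥0∞`. -/
lemma ofReal_norm_le_liminf {x : ℕ → X} {x₀ : X} (h : WeakConv x x₀) :
    ENNReal.ofReal ‖x₀‖ ≤ liminf (fun n => ENNReal.ofReal ‖x n‖) atTop := by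
  obtain ⟨f, hf1, hf2⟩ := exists_dual_vector'' ℝ x₀
  have hf2' : f x₀ = ‖x₀‖ := by exact_mod_cast hf2
  have h1 : Tendsto (fun n => ENNReal.ofReal (f (x n))) atTop (𝓝 (ENNReal.ofReal ‖x₀‖)) := by
    rw [← hf2']
    exact (ENNReal.continuous_ofReal.tendsto _).comp (h f)
  rw [← h1.liminf_eq]
  refine liminf_le_liminf (Eventually.of_forall fun n => ?_)
  apply ENNReal.ofReal_le_ofReal
  calc f (x n) ≤ ‖f (x n)‖ := le_abs_self _
  _ ≤ ‖f‖ * ‖x n‖ := f.le_opNorm _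
  _ ≤ 1 * ‖x n‖ := mul_le_mul_of_nonneg_right hf1 (norm_nonneg _)
  _ = ‖x n‖ := one_mul _

/-- superadditivity of liminf in `ℝ≥0∞` -/
lemma ennreal_le_liminf_add {f g : ℕ → ℝ≥0∞} :
    liminf f atTop + liminf g atTop ≤ liminf (fun n => f n + g n) atTop := by
  have hb1 : ∀ (h : ℕ → ℝ≥0∞), IsBoundedUnder (fun x1 x2 => x1 ≥ x2) atTop h :=
    fun h => Filter.isBoundedUnder_of ⟨⊥, fun x => bot_le⟩
  have hb2 : ∀ (h : ℕ → ℝ≥0∞), IsBoundedUnder (fun x1 x2 => x1 ≤ x2) atTop h :=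
    fun h => Filter.isBoundedUnder_of ⟨⊤, fun x => le_top⟩
  set A := liminf f atTop
  set B := liminf g atTop
  rw [le_liminf_iff ((hb2 _).isCoboundedUnder_ge) (hb1 _)]
  intro y hy
  rcases lt_or_ge y A with hyA | hAy
  · obtain ⟨a', hya, haA⟩ := exists_between hyA
    filter_upwards [eventually_lt_of_lt_liminf haA (hb1 f)] with n hn
    exact lt_of_lt_of_le (lt_of_lt_of_le hya hn.le) le_self_add
  · have hyT : y ≠ ⊤ := hy.ne_top
    have hA_ne : A ≠ ⊤ := fun hA => hyT (top_le_iff.1 (hA ▸ hAy))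
    have hsub : y - A < B := by
      apply ENNReal.sub_lt_of_lt_add hAy
      rwa [add_comm]
    obtain ⟨b', hb', hbB⟩ := exists_between hsub
    rcases le_or_gt y b' with hyb | hby
    · filter_upwards [eventually_lt_of_lt_liminf hbB (hb1 g)] with n hn
      exact lt_of_le_of_lt hyb hn |>.trans_le le_add_self
    · have h2 : y - b' < A := by
        apply ENNReal.sub_lt_of_lt_add hby.le
        have hA0 : A ≠ 0 → True := fun _ => trivial
        calc y = A + (y - A) := by rw [add_comm, tsub_add_cancel_of_le hAy]
        _ ≤ A + (y - A) := le_rfl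
        _ < A + b' := ENNReal.add_lt_add_left hA_ne hb'

      obtain ⟨a', ha', haA⟩ := exists_between h2
      filter_upwards [eventually_lt_of_lt_liminf haA (hb1 f),
        eventually_lt_of_lt_liminf hbB (hb1 g)] with n hf hg
      calc y = (y - b') + b' := (tsub_add_cancel_of_le hby.le).symm
      _ ≤ a' + b' := add_le_add_left ha'.le _
      _ < f n + g n := ENNReal.add_lt_add hf hg

lemma ennreal_sum_liminf_le {ι : Type*} (s : Finset ι) (F : ι → ℕ → ℝ≥0∞) :
    ∑ i ∈ s, liminf (F i) atTop ≤ liminf (fun n => ∑ i ∈ s, F i n) atTop := by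
  classical
  induction s using Finset.induction with
  | empty => simp
  | insert _ _ hx ih =>
    rename_i a s
    simp only [Finset.sum_insert hx]
    exact le_trans (add_le_add_right ih _) ennreal_le_liminf_add

end AuxLemmas

section Master
open NormedSpace

lemma ennreal_const_mul_liminf_le (c : ℝ≥0∞) (f : ℕ → ℝ≥0∞) :
    c * liminf f atTop ≤ liminf (fun n => c * f n) atTop := by
  have h1 : liminf (fun _ : ℕ => c) atTop = c := liminf_const c
  calc c * liminf f atTop = liminf (fun _ : ℕ => c) atTop * liminf f atTop := by rw [h1]
  _ ≤ liminf ((fun _ : ℕ => c) * f) atTop := ENNReal.le_liminf_mul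
  _ = liminf (fun n => c * f n) atTop := rfl

lemma ennreal_sq_le_liminf {x : ℝ≥0∞} {b : ℕ → ℝ≥0∞} (h : x ≤ liminf b atTop) :
    x ^ 2 ≤ liminf (fun n => b n ^ 2) atTop := by
  have h3 : (fun n => b n ^ 2) = (fun n => b n) * (fun n => b n) := by
    funext n; rw [Pi.mul_apply, ← sq]
  calc x ^ 2 = x * x := sq x
  _ ≤ liminf b atTop * liminf b atTop := mul_le_mul' h h
  _ ≤ liminf ((fun n => b n) * (fun n => b n)) atTop := ENNReal.le_liminf_mul
  _ = liminf (fun n => b n ^ 2) atTop := by rw [← h3]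

lemma jfun_master {Y U Z Ytil : Type*} [NormedAddCommGroup Y] [NormedSpace ℝ Y]
    [NormedAddCommGroup U] [NormedSpace ℝ U]
    [NormedAddCommGroup Ytil] [InnerProductSpace ℝ Ytil] [Zero Z]
    {m r : ℕ} (hr : 0 < r)
    (hYrefl : Function.Surjective (NormedSpace.inclusionInDoubleDual ℝ Y))
    (hUrefl : Function.Surjective (NormedSpace.inclusionInDoubleDual ℝ U))
    (ιY : Y →L[ℝ] Ytil)
    (Uad : Set U) (e : Y → U → Z) (Ψ : Fin r → U → ℝ≥0∞)
    (αlo αhi : Fin r → ℝ) (hαpos : ∀ i, 0 < αlo i)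
    (hH1 : Convex ℝ Uad ∧ IsClosed Uad)
    (hH3 : ∀ (y : ℕ → Y) (u : ℕ → U) (ybar : Y) (ubar : U),
      (∀ n, u n ∈ Uad) → ubar ∈ Uad → (∀ n, e (y n) (u n) = 0) →
      WeakConv (fun n => (y n, u n)) (ybar, ubar) → e ybar ubar = 0)
    (hH4 : ∀ (y : ℕ → Y) (u : ℕ → U), (∀ n, (y n, u n) ∈ Fad Uad e) →
      (∃ C : ℝ, ∀ n, ‖u n‖ ≤ C) → ∃ C : ℝ, ∀ n, ‖y n‖ ≤ C)
    (hH5coer : ∀ u : ℕ → U, Tendsto (fun n => ‖u n‖) atTop atTop →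
      Tendsto (fun n => ∑ i, Ψ i (u n)) atTop (𝓝 (⊤ : ℝ≥0∞)))
    (hH5prop : ∃ p ∈ Fad Uad e, ∑ i, Ψ i p.2 ≠ ⊤)
    (hH6 : ∀ (i : Fin r) (u : ℕ → U) (ubar : U), WeakConv u ubar →
      Ψ i ubar ≤ Filter.liminf (fun n => Ψ i (u n)) atTop)
    (yδ : Fin m → Ytil)
    (αseq : ℕ → Fin r → ℝ) (hαseq : ∀ n i, αlo i ≤ αseq n i ∧ αseq n i ≤ αhi i)
    (αstar : Fin r → ℝ) (hαconv : ∀ i, Tendsto (fun n => αseq n i) atTop (𝓝 (αstar i)))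
    (hαstar : ∀ i, αlo i ≤ αstar i)
    (p : ℕ → Y × U) (hp : ∀ n, p n ∈ Fad Uad e)
    (ε : ℕ → ℝ≥0∞) (hε1 : ∀ n, ε n ≤ 1) (hε0 : Tendsto ε atTop (𝓝 0))
    (hmin : ∀ q ∈ Fad Uad e, ∀ n,
      Jfun ιY Ψ (αseq n) yδ (p n) ≤ Jfun ιY Ψ (αseq n) yδ q + ε n) :
    ∃ (pbar : Y × U) (φ : ℕ → ℕ), StrictMono φ ∧
      WeakConv (fun n => p (φ n)) pbar ∧ Solves Uad e ιY Ψ αstar yδ pbar := by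
  classical
  obtain ⟨q0, hq0, hq0fin⟩ := hH5prop
  -- uniform bound on the values
  set c : ℝ := 1 / (2 * (m : ℝ)) with hc
  have hc0 : 0 ≤ c := by positivity
  set Q0 : ℝ≥0∞ := ENNReal.ofReal (c * ∑ j, ‖ιY q0.1 - yδ j‖ ^ 2) with hQ0
  set B1 : ℝ≥0∞ := ∑ i, ENNReal.ofReal (αhi i) * Ψ i q0.2 with hB1
  have hΨq0 : ∀ i, Ψ i q0.2 ≠ ⊤ := by
    intro i
    intro h
    apply hq0fin
    exact ENNReal.sum_eq_top.2 ⟨i, Finset.mem_univ i, h⟩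
  have hB1top : B1 ≠ ⊤ := by
    rw [hB1]
    rw [ENNReal.sum_ne_top]
    intro i _
    exact ENNReal.mul_ne_top ENNReal.ofReal_ne_top (hΨq0 i)
  set B : ℝ≥0∞ := Q0 + B1 + 1 with hB
  have hBtop : B ≠ ⊤ := by
    rw [hB]
    exact ENNReal.add_ne_top.2 ⟨ENNReal.add_ne_top.2 ⟨ENNReal.ofReal_ne_top, hB1top⟩, ENNReal.one_ne_top⟩
  have hJp : ∀ n, Jfun ιY Ψ (αseq n) yδ (p n) ≤ B := by
    intro n
    refine le_trans (hmin q0 hq0 n) ?_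
    rw [hB]
    refine add_le_add ?_ (hε1 n)
    unfold Jfun
    refine add_le_add le_rfl ?_
    refine Finset.sum_le_sum fun i _ => ?_
    exact mul_le_mul_left (ENNReal.ofReal_le_ofReal (hαseq n i).2) _
  -- lower bound on the regularization coefficients
  have hFinNe : (Finset.univ : Finset (Fin r)).Nonempty := by
    have : Nonempty (Fin r) := Fin.pos_iff_nonempty.1 hr
    exact Finset.univ_nonempty
  set a : ℝ := Finset.univ.inf' hFinNe αlo with ha
  have ha0 : 0 < a := by
    rw [ha, Finset.lt_inf'_iff]
    exact fun i _ => hαpos i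
  have hale : ∀ i, a ≤ αlo i := fun i => Finset.inf'_le _ (Finset.mem_univ i)
  -- bound on the sum of the Ψ's
  have hsumΨ : ∀ n, ∑ i, Ψ i ((p n).2) ≤ B / ENNReal.ofReal a := by
    intro n
    rw [ENNReal.le_div_iff_mul_le (Or.inl (ENNReal.ofReal_pos.2 ha0).ne') (Or.inl ENNReal.ofReal_ne_top)]
    calc (∑ i, Ψ i ((p n).2)) * ENNReal.ofReal a = ∑ i, Ψ i ((p n).2) * ENNReal.ofReal a :=
        Finset.sum_mul _ _ _
    _ ≤ ∑ i, ENNReal.ofReal (αseq n i) * Ψ i ((p n).2) := by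
        refine Finset.sum_le_sum fun i _ => ?_
        rw [mul_comm]
        exact mul_le_mul_left (ENNReal.ofReal_le_ofReal ((hale i).trans (hαseq n i).1)) _
    _ ≤ Jfun ιY Ψ (αseq n) yδ (p n) := le_add_self
    _ ≤ B := hJp n
  have hdiv_top : B / ENNReal.ofReal a ≠ ⊤ :=
    (ENNReal.div_lt_top hBtop (ENNReal.ofReal_pos.2 ha0).ne').ne
  -- boundedness of the u-component
  have hubdd : ∃ C : ℝ, ∀ n, ‖(p n).2‖ ≤ C := by
    by_contra hcon
    push_neg at hcon
    choose nk hnk using hcon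
    have hv : Tendsto (fun k : ℕ => ‖(p (nk (k : ℝ))).2‖) atTop atTop := by
      apply tendsto_atTop_mono (fun k : ℕ => (hnk (k : ℝ)).le)
      exact tendsto_natCast_atTop_atTop
    have h2 := hH5coer _ hv
    have h3 : ∀ᶠ k in atTop, B / ENNReal.ofReal a <
        ∑ i, Ψ i ((p (nk ((k : ℕ) : ℝ))).2) :=
      h2.eventually (eventually_gt_nhds (hdiv_top.lt_top))
    obtain ⟨k, hk⟩ := h3.exists
    exact absurd (hsumΨ (nk (k : ℝ))) (not_le.2 hk)
  obtain ⟨Cu, hCu⟩ := hubdd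
  have hybdd : ∃ C : ℝ, ∀ n, ‖(p n).1‖ ≤ C := by
    apply hH4 (fun n => (p n).1) (fun n => (p n).2) _ ⟨Cu, hCu⟩
    intro n
    have := hp n
    simpa using this
  obtain ⟨Cy, hCy⟩ := hybdd
  -- extraction of weakly convergent subsequences
  obtain ⟨ubar, φ₁, hφ₁, hcu₁⟩ := weak_seq_compact hUrefl (fun n => (p n).2) Cu hCu
  obtain ⟨ybar, φ₂, hφ₂, hcy⟩ :=
    weak_seq_compact hYrefl (fun n => (p (φ₁ n)).1) Cy (fun n => hCy _)
  set ψ : ℕ → ℕ := φ₁ ∘ φ₂ with hψdef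
  have hψ : StrictMono ψ := hφ₁.comp hφ₂
  have hcu : WeakConv (fun n => (p (ψ n)).2) ubar := hcu₁.subseq hφ₂
  have hcyy : WeakConv (fun n => (p (ψ n)).1) ybar := hcy
  have hpair : WeakConv (fun n => p (ψ n)) (ybar, ubar) := by
    have := hcyy.prod hcu
    convert this using 1
  have hUadbar : ubar ∈ Uad :=
    mem_of_weakConv hH1.1 hH1.2 (fun n => (hp (ψ n)).1) hcu
  have hebar : e ybar ubar = 0 := by
    apply hH3 (fun n => (p (ψ n)).1) (fun n => (p (ψ n)).2) ybar ubar
      (fun n => (hp (ψ n)).1) hUadbar (fun n => (hp (ψ n)).2)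
    exact hcyy.prod hcu
  have hpbarFad : ((ybar, ubar) : Y × U) ∈ Fad Uad e := ⟨hUadbar, hebar⟩
  refine ⟨(ybar, ubar), ψ, hψ, hpair, hpbarFad, fun q hq => ?_⟩
  have hrw : ∀ v : Y, ENNReal.ofReal ((1 / (2 * (m : ℝ))) * ∑ j, ‖ιY v - yδ j‖ ^ 2)
      = ENNReal.ofReal (1 / (2 * (m : ℝ))) * ∑ j, (ENNReal.ofReal ‖ιY v - yδ j‖) ^ 2 := by
    intro v
    rw [ENNReal.ofReal_mul hc0, ENNReal.ofReal_sum_of_nonneg (fun j _ => by positivity)]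
    congr 1
    refine Finset.sum_congr rfl fun j _ => ?_
    rw [← ENNReal.ofReal_pow (norm_nonneg _)]
  have key1 : Jfun ιY Ψ αstar yδ (ybar, ubar) ≤
      liminf (fun n => Jfun ιY Ψ (αseq (ψ n)) yδ (p (ψ n))) atTop := by
    have hquad : ENNReal.ofReal (1 / (2 * (m : ℝ))) * ∑ j, (ENNReal.ofReal ‖ιY ybar - yδ j‖) ^ 2 ≤
        liminf (fun n => ENNReal.ofReal (1 / (2 * (m : ℝ))) *
          ∑ j, (ENNReal.ofReal ‖ιY ((p (ψ n)).1) - yδ j‖) ^ 2) atTop := by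
      calc ENNReal.ofReal (1 / (2 * (m : ℝ))) * ∑ j, (ENNReal.ofReal ‖ιY ybar - yδ j‖) ^ 2
          ≤ ENNReal.ofReal (1 / (2 * (m : ℝ))) * ∑ j,
            liminf (fun n => (ENNReal.ofReal ‖ιY ((p (ψ n)).1) - yδ j‖) ^ 2) atTop := by
            refine mul_le_mul_right (Finset.sum_le_sum fun j _ => ?_) _
            refine ennreal_sq_le_liminf (ofReal_norm_le_liminf ?_)
            exact (hcyy.comp_clm ιY).sub_const (yδ j)
      _ ≤ ENNReal.ofReal (1 / (2 * (m : ℝ))) * liminf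
            (fun n => ∑ j, (ENNReal.ofReal ‖ιY ((p (ψ n)).1) - yδ j‖) ^ 2) atTop :=
            mul_le_mul_right (ennreal_sum_liminf_le _ _) _
      _ ≤ liminf (fun n => ENNReal.ofReal (1 / (2 * (m : ℝ))) *
            ∑ j, (ENNReal.ofReal ‖ιY ((p (ψ n)).1) - yδ j‖) ^ 2) atTop :=
            ennreal_const_mul_liminf_le _ _
    have hpsi : ∑ i, ENNReal.ofReal (αstar i) * Ψ i ubar ≤
        liminf (fun n => ∑ i, ENNReal.ofReal (αseq (ψ n) i) * Ψ i ((p (ψ n)).2)) atTop := by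
      refine le_trans (Finset.sum_le_sum fun i _ => ?_) (ennreal_sum_liminf_le _ _)
      have h1 : ENNReal.ofReal (αstar i) = liminf (fun n => ENNReal.ofReal (αseq (ψ n) i)) atTop := by
        symm
        apply Filter.Tendsto.liminf_eq
        exact (ENNReal.continuous_ofReal.tendsto _).comp ((hαconv i).comp hψ.tendsto_atTop)
      have h2 := hH6 i (fun n => (p (ψ n)).2) ubar hcu
      calc ENNReal.ofReal (αstar i) * Ψ i ubar
          ≤ liminf (fun n => ENNReal.ofReal (αseq (ψ n) i)) atTop *
            liminf (fun n => Ψ i ((p (ψ n)).2)) atTop := by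
            rw [← h1]; exact mul_le_mul_right h2 _
      _ ≤ liminf (fun n => ENNReal.ofReal (αseq (ψ n) i) * Ψ i ((p (ψ n)).2)) atTop := by
            have h3 : (fun n => ENNReal.ofReal (αseq (ψ n) i) * Ψ i ((p (ψ n)).2)) =
              (fun n => ENNReal.ofReal (αseq (ψ n) i)) * (fun n => Ψ i ((p (ψ n)).2)) := rfl
            rw [h3]
            exact ENNReal.le_liminf_mul
    unfold Jfun
    simp only [hrw]
    exact le_trans (add_le_add hquad hpsi) ennreal_le_liminf_add
  have key2 : liminf (fun n => Jfun ιY Ψ (αseq (ψ n)) yδ (p (ψ n))) atTop ≤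
      liminf (fun n => Jfun ιY Ψ (αseq (ψ n)) yδ q + ε (ψ n)) atTop :=
    liminf_le_liminf (Eventually.of_forall fun n => hmin q hq (ψ n))
  have key3 : liminf (fun n => Jfun ιY Ψ (αseq (ψ n)) yδ q + ε (ψ n)) atTop ≤
      Jfun ιY Ψ αstar yδ q := by
    by_cases htop : ∃ i, Ψ i q.2 = ⊤
    · obtain ⟨i, hi⟩ := htop
      have hJtop : Jfun ιY Ψ αstar yδ q = ⊤ := by
        unfold Jfun
        rw [ENNReal.add_eq_top]
        right
        rw [ENNReal.sum_eq_top]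
        refine ⟨i, Finset.mem_univ i, ?_⟩
        rw [hi, ENNReal.mul_top]
        exact (ENNReal.ofReal_pos.2 (lt_of_lt_of_le (hαpos i) (hαstar i))).ne'
      rw [hJtop]; exact le_top
    · push_neg at htop
      have hconv : Tendsto (fun n => Jfun ιY Ψ (αseq (ψ n)) yδ q + ε (ψ n)) atTop
          (𝓝 (Jfun ιY Ψ αstar yδ q)) := by
        have h0 : Tendsto (fun n => ε (ψ n)) atTop (𝓝 0) := hε0.comp hψ.tendsto_atTop
        have h1 : Tendsto (fun n => Jfun ιY Ψ (αseq (ψ n)) yδ q) atTop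
            (𝓝 (Jfun ιY Ψ αstar yδ q)) := by
          unfold Jfun
          refine Tendsto.add tendsto_const_nhds ?_
          refine tendsto_finset_sum _ fun i _ => ?_
          refine ENNReal.Tendsto.mul_const ?_ (Or.inr (htop i))
          exact (ENNReal.continuous_ofReal.tendsto _).comp ((hαconv i).comp hψ.tendsto_atTop)
        have hsum := h1.add h0
        rwa [add_zero] at hsum
      rw [hconv.liminf_eq]
  exact le_trans key1 (le_trans key2 key3)

end Master

variable {Y U Util Ytil Z : Type*}
  [NormedAddCommGroup Y] [NormedSpace ℝ Y] [CompleteSpace Y]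
  [NormedAddCommGroup U] [NormedSpace ℝ U] [CompleteSpace U]
  [NormedAddCommGroup Util] [InnerProductSpace ℝ Util] [CompleteSpace Util]
  [NormedAddCommGroup Ytil] [InnerProductSpace ℝ Ytil] [CompleteSpace Ytil]
  [NormedAddCommGroup Z] [NormedSpace ℝ Z] [CompleteSpace Z]

/-- **Theorem 4.1** (existence of solutions of the learning problem): under (H1)–(H6),
the learning problem `(LP)` has a solution: there are `α* ∈ [αlo,αhi]` and a solution
`(y*,u*)` of `(P_{α*,yδ})` whose distance to `u†` in `Ũ` is minimal among all
solutions of the lower level problems over all admissible parameters. -/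
theorem learning_problem_has_solution
    (hYrefl : Function.Surjective (NormedSpace.inclusionInDoubleDual ℝ Y))
    (hUrefl : Function.Surjective (NormedSpace.inclusionInDoubleDual ℝ U))
    {m r : ℕ} (hm : 0 < m) (hr : 0 < r)
    (ιY : Y →L[ℝ] Ytil) (hιY : Function.Injective ιY)
    (Uad : Set U) (e : Y → U → Z) (Ψ : Fin r → U → ℝ≥0∞)
    (αlo αhi : Fin r → ℝ) (hαpos : ∀ i, 0 < αlo i) (hαle : ∀ i, αlo i ≤ αhi i)
    (hH1 : Convex ℝ Uad ∧ IsClosed Uad)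
    (hH2 : (Fad Uad e).Nonempty)
    (hH3 : ∀ (y : ℕ → Y) (u : ℕ → U) (ybar : Y) (ubar : U),
      (∀ n, u n ∈ Uad) → ubar ∈ Uad → (∀ n, e (y n) (u n) = 0) →
      WeakConv (fun n => (y n, u n)) (ybar, ubar) → e ybar ubar = 0)
    (hH4 : ∀ (y : ℕ → Y) (u : ℕ → U), (∀ n, (y n, u n) ∈ Fad Uad e) →
      (∃ C : ℝ, ∀ n, ‖u n‖ ≤ C) → ∃ C : ℝ, ∀ n, ‖y n‖ ≤ C)
    (hH5coer : ∀ u : ℕ → U, Tendsto (fun n => ‖u n‖) atTop atTop →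
      Tendsto (fun n => ∑ i, Ψ i (u n)) atTop (𝓝 (⊤ : ℝ≥0∞)))
    (hH5prop : ∃ p ∈ Fad Uad e, ∑ i, Ψ i p.2 ≠ ⊤)
    (hH6 : ∀ (i : Fin r) (u : ℕ → U) (ubar : U), WeakConv u ubar →
      Ψ i ubar ≤ Filter.liminf (fun n => Ψ i (u n)) atTop)
    (ιU : U →L[ℝ] Util) (hιU : Function.Injective ιU)
    (udag : Util) (yδ : Fin m → Ytil) :
    ∃ αstar : Fin r → ℝ, (∀ i, αlo i ≤ αstar i ∧ αstar i ≤ αhi i) ∧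
      ∃ p : Y × U, Solves Uad e ιY Ψ αstar yδ p ∧
        ∀ α : Fin r → ℝ, (∀ i, αlo i ≤ α i ∧ α i ≤ αhi i) →
          ∀ q : Y × U, Solves Uad e ιY Ψ α yδ q →
            ‖ιU p.2 - udag‖ ^ 2 ≤ ‖ιU q.2 - udag‖ ^ 2 := by
  classical
  set ε : ℕ → ℝ≥0∞ := fun n => (((n+1 : ℕ) : ℝ≥0∞))⁻¹ with hε
  have hε1 : ∀ n, ε n ≤ 1 := by
    intro n
    rw [hε, ENNReal.inv_le_one]
    exact_mod_cast Nat.one_le_iff_ne_zero.2 (Nat.succ_ne_zero n)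
  have hε0 : Tendsto ε atTop (𝓝 0) := by
    have h1 : Tendsto (fun n : ℕ => ((n : ℝ≥0∞))⁻¹) atTop (𝓝 0) :=
      ENNReal.tendsto_inv_nat_nhds_zero
    exact h1.comp (tendsto_add_atTop_nat 1)
  -- Existence of solutions of the lower level problem for each admissible parameter
  have hexists : ∀ (α : Fin r → ℝ), (∀ i, αlo i ≤ α i ∧ α i ≤ αhi i) →
      ∃ p, Solves Uad e ιY Ψ α yδ p := by
    intro α hα
    obtain ⟨q0, hq0, hq0fin⟩ := id hH5prop
    set S := {d : ℝ≥0∞ | ∃ q ∈ Fad Uad e, d = Jfun ιY Ψ α yδ q} with hS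
    have hSne : (Jfun ιY Ψ α yδ q0) ∈ S := by rw [hS]; exact ⟨q0, hq0, rfl⟩
    have hJq0 : Jfun ιY Ψ α yδ q0 ≠ ⊤ := by
      unfold Jfun
      rw [ENNReal.add_ne_top]
      constructor
      · exact ENNReal.ofReal_ne_top
      · rw [ENNReal.sum_ne_top]
        intro i _
        refine ENNReal.mul_ne_top ENNReal.ofReal_ne_top ?_
        intro h
        exact hq0fin (ENNReal.sum_eq_top.2 ⟨i, Finset.mem_univ i, h⟩)
    have hIfin : sInf S ≠ ⊤ := fun h => hJq0 (top_le_iff.1 (h ▸ sInf_le hSne))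
    have hchoice : ∀ n : ℕ, ∃ q, q ∈ Fad Uad e ∧ Jfun ιY Ψ α yδ q ≤ sInf S + ε n := by
      intro n
      have hlt : sInf S < sInf S + ε n := by
        refine ENNReal.lt_add_right hIfin ?_
        rw [hε]
        simp
      obtain ⟨d, hdS, hdlt⟩ := sInf_lt_iff.1 hlt
      obtain ⟨q, hqF, rfl⟩ := hdS
      exact ⟨q, hqF, hdlt.le⟩
    choose pseq hpF hple using hchoice
    have hmin : ∀ q ∈ Fad Uad e, ∀ n,
        Jfun ιY Ψ α yδ (pseq n) ≤ Jfun ιY Ψ α yδ q + ε n :=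
      fun q hq n => le_trans (hple n) (add_le_add_left (sInf_le (by rw [hS]; exact ⟨q, hq, rfl⟩)) _)
    obtain ⟨pbar, φ, hφ, hconv, hsol⟩ := jfun_master hr hYrefl hUrefl ιY Uad e Ψ αlo αhi
      hαpos hH1 hH3 hH4 hH5coer hH5prop hH6 yδ
      (fun _ => α) (fun _ i => hα i) α (fun _ => tendsto_const_nhds) (fun i => (hα i).1)
      pseq hpF ε hε1 hε0 hmin
    exact ⟨pbar, hsol⟩
  -- The learning problem
  set T := {d : ℝ≥0∞ | ∃ α q, (∀ i, αlo i ≤ α i ∧ α i ≤ αhi i) ∧ Solves Uad e ιY Ψ α yδ q ∧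
    d = ENNReal.ofReal (‖ιU q.2 - udag‖ ^ 2)} with hT
  obtain ⟨p₀, hp₀⟩ := hexists αlo (fun i => ⟨le_rfl, hαle i⟩)
  have hTne : ENNReal.ofReal (‖ιU p₀.2 - udag‖ ^ 2) ∈ T := by
    rw [hT]; exact ⟨αlo, p₀, fun i => ⟨le_rfl, hαle i⟩, hp₀, rfl⟩
  have hIfin : sInf T ≠ ⊤ :=
    fun h => ENNReal.ofReal_ne_top (top_le_iff.1 (h ▸ sInf_le hTne))
  have hchoice : ∀ n : ℕ, ∃ αq : (Fin r → ℝ) × (Y × U),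
      (∀ i, αlo i ≤ αq.1 i ∧ αq.1 i ≤ αhi i) ∧ Solves Uad e ιY Ψ αq.1 yδ αq.2 ∧
      ENNReal.ofReal (‖ιU αq.2.2 - udag‖ ^ 2) ≤ sInf T + ε n := by
    intro n
    have hlt : sInf T < sInf T + ε n := by
      refine ENNReal.lt_add_right hIfin ?_
      rw [hε]; simp
    obtain ⟨d, hdT, hdlt⟩ := sInf_lt_iff.1 hlt
    obtain ⟨α, q, hb, hs, rfl⟩ := hdT
    exact ⟨(α, q), hb, hs, hdlt.le⟩
  choose αq hbound hsolseq hdle using hchoice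
  set αn : ℕ → Fin r → ℝ := fun n => (αq n).1 with hαn
  set qn : ℕ → Y × U := fun n => (αq n).2 with hqn
  have hbox : ∀ n, αn n ∈ Set.Icc αlo αhi := by
    intro n
    rw [Set.mem_Icc]
    exact ⟨fun i => (hbound n i).1, fun i => (hbound n i).2⟩
  obtain ⟨αstar, hαstarIcc, φ, hφ, hαconv⟩ := (isCompact_Icc (a := αlo) (b := αhi)).tendsto_subseq hbox
  rw [Set.mem_Icc] at hαstarIcc
  have hαconv' : ∀ i, Tendsto (fun n => αn (φ n) i) atTop (𝓝 (αstar i)) := by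
    intro i
    exact ((continuous_apply i).tendsto _).comp hαconv
  have hminexact : ∀ q ∈ Fad Uad e, ∀ n,
      Jfun ιY Ψ (αn (φ n)) yδ (qn (φ n)) ≤ Jfun ιY Ψ (αn (φ n)) yδ q + (0 : ℝ≥0∞) := by
    intro q hq n
    rw [add_zero]
    exact (hsolseq (φ n)).2 q hq
  obtain ⟨pbar, φ₂, hφ₂, hconv, hsolstar⟩ := jfun_master hr hYrefl hUrefl ιY Uad e Ψ αlo αhi
    hαpos hH1 hH3 hH4 hH5coer hH5prop hH6 yδ
    (fun n => αn (φ n)) (fun n i => hbound (φ n) i) αstar hαconv'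
    (fun i => hαstarIcc.1 i)
    (fun n => qn (φ n)) (fun n => (hsolseq (φ n)).1)
    (fun _ => 0) (fun _ => zero_le_one) tendsto_const_nhds hminexact
  refine ⟨αstar, fun i => ⟨hαstarIcc.1 i, hαstarIcc.2 i⟩, pbar, hsolstar, ?_⟩
  intro α hα q hq
  -- weak lower semicontinuity of the distance
  have hwu : WeakConv (fun n => (qn (φ (φ₂ n))).2) pbar.2 :=
    fun f => hconv (f.comp (ContinuousLinearMap.snd ℝ Y U))
  have hlsc : ENNReal.ofReal ‖ιU pbar.2 - udag‖ ≤
      liminf (fun n => ENNReal.ofReal ‖ιU ((qn (φ (φ₂ n))).2) - udag‖) atTop :=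
    ofReal_norm_le_liminf ((hwu.comp_clm ιU).sub_const udag)
  have h2 : ENNReal.ofReal (‖ιU pbar.2 - udag‖ ^ 2) ≤
      liminf (fun n => ENNReal.ofReal (‖ιU ((qn (φ (φ₂ n))).2) - udag‖ ^ 2)) atTop := by
    have := ennreal_sq_le_liminf hlsc
    rw [ENNReal.ofReal_pow (norm_nonneg _)]
    refine le_trans this (le_of_eq ?_)
    congr 1
    funext n
    rw [ENNReal.ofReal_pow (norm_nonneg _)]
  have h3 : liminf (fun n => ENNReal.ofReal (‖ιU ((qn (φ (φ₂ n))).2) - udag‖ ^ 2)) atTop ≤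
      sInf T := by
    have hmono : liminf (fun n => ENNReal.ofReal (‖ιU ((qn (φ (φ₂ n))).2) - udag‖ ^ 2)) atTop ≤
        liminf (fun n => sInf T + ε (φ (φ₂ n))) atTop :=
      liminf_le_liminf (Eventually.of_forall fun n => hdle (φ (φ₂ n)))
    have htend : Tendsto (fun n => sInf T + ε (φ (φ₂ n))) atTop (𝓝 (sInf T)) := by
      have h0 : Tendsto (fun n => ε (φ (φ₂ n))) atTop (𝓝 0) :=
        hε0.comp (hφ.comp hφ₂).tendsto_atTop
      have := Tendsto.add (tendsto_const_nhds (x := sInf T) (f := atTop)) h0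
      rwa [add_zero] at this
    rw [htend.liminf_eq] at hmono
    exact hmono
  have h4 : sInf T ≤ ENNReal.ofReal (‖ιU q.2 - udag‖ ^ 2) :=
    sInf_le (by rw [hT]; exact ⟨α, q, hα, hq, rfl⟩)
  have hfinal := le_trans h2 (le_trans h3 h4)
  rwa [ENNReal.ofReal_le_ofReal_iff (by positivity)] at hfinal
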